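/- Let P ⊂ ℝ^d_{≥0} be an anti-blocking lattice polytope of dimension d. Then h*(P^±, x) = ∑_{j=0}^d 2^j (x−1)^{d−j} ∑_{J ⊆ [d], |J| = j} h*(π_J(P), x), where for J = {j_1,…,j_r} ⊆ [d], π_J : ℝ^d → ℝ^r denotes the coordinate projection π_J(x_1,…,x_d) = (x_{j_1},…,x_{j_r}) (with π_∅ the zero map, so h*(π_∅(P), x) = 1). -/

import Mathlib

open scoped Pointwise
open Polynomial

namespace ABP

variable {V : Type*}

/-- A point of `ℝ^V` all of whose coordinates are integers. -/
def IsLatticePoint (x : V → ℝ) : Prop := ∀ i, ∃ z : ℤ, x i = (z : ℝ)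

/-- A lattice polytope: the convex hull of finitely many lattice points. -/
def IsLatticePolytope [Fintype V] (P : Set (V → ℝ)) : Prop :=
  ∃ S : Finset (V → ℝ), (∀ v ∈ S, IsLatticePoint v) ∧ P = convexHull ℝ (S : Set (V → ℝ))

/-- The dimension of a polytope, as the rank of its vector span. -/
noncomputable def polyDim [Fintype V] (P : Set (V → ℝ)) : ℕ :=
  Module.finrank ℝ (vectorSpan ℝ P)

/-- The number of lattice points of the `m`-th dilate of `P`. -/
noncomputable def latticeCount [Fintype V] (P : Set (V → ℝ)) (m : ℕ) : ℕ :=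
  Set.ncard {x : V → ℤ | (fun i => (x i : ℝ)) ∈ (m : ℝ) • P}

/-- `h` is the `h^*`-polynomial of the lattice polytope `P`:
`(1 + ∑_{m≥1} L_P(m) x^m) · (1-x)^{dim P + 1} = h` as formal power series. -/
def IsHStar [Fintype V] (P : Set (V → ℝ)) (h : Polynomial ℝ) : Prop :=
  (PowerSeries.mk fun m => if m = 0 then (1 : ℝ) else (latticeCount P m : ℝ)) *
      (1 - PowerSeries.X) ^ (polyDim P + 1) = (h : PowerSeries ℝ)

/-- `f` is γ-positive: `f = ∑ γ_i x^i (1+x)^{deg f - 2i}` with all `γ_i ≥ 0`. -/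
def GammaPositive (f : Polynomial ℝ) : Prop :=
  ∃ γ : ℕ → ℝ, (∀ i, 0 ≤ γ i) ∧
    f = ∑ i ∈ Finset.range (f.natDegree / 2 + 1),
      Polynomial.C (γ i) * Polynomial.X ^ i * (1 + Polynomial.X) ^ (f.natDegree - 2 * i)

/-- A real polynomial is real-rooted if all of its complex roots are real. -/
def RealRooted (f : Polynomial ℝ) : Prop :=
  ∀ z : ℂ, (f.map (algebraMap ℝ ℂ)).IsRoot z → z.im = 0

/-- The `±1`-vector associated to `ε : V → Bool`. -/
def signVec (ε : V → Bool) : V → ℝ := fun i => if ε i then 1 else -1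

/-- The unconditional set `P^± = {εx : ε ∈ {-1,1}^V, x ∈ P}`. -/
def uncond (P : Set (V → ℝ)) : Set (V → ℝ) :=
  {y | ∃ (ε : V → Bool) (x : V → ℝ), x ∈ P ∧ y = signVec ε * x}

/-- The closed orthant `ℝ^V_ε`. -/
def orthant (ε : V → Bool) : Set (V → ℝ) := {x | ∀ i, 0 ≤ signVec ε i * x i}

/-- Anti-blocking set: contained in the nonnegative orthant and downward closed there. -/
def IsAntiBlocking (P : Set (V → ℝ)) : Prop :=
  (∀ x ∈ P, ∀ i, 0 ≤ x i) ∧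
    ∀ y ∈ P, ∀ x : V → ℝ, (∀ i, 0 ≤ x i ∧ x i ≤ y i) → x ∈ P

/-- Locally anti-blocking (full-dimensional) lattice polytope. -/
def LocallyAntiBlocking [Fintype V] (P : Set (V → ℝ)) : Prop :=
  ∀ ε : V → Bool, ∃ Q : Set (V → ℝ), IsLatticePolytope Q ∧ IsAntiBlocking Q ∧
    polyDim Q = Fintype.card V ∧ P ∩ orthant ε = uncond Q ∩ orthant ε

/-- The dual (polar) body of `P`. -/
def dualPoly [Fintype V] (P : Set (V → ℝ)) : Set (V → ℝ) :=
  {y | ∀ x ∈ P, ∑ i, x i * y i ≤ 1}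

/-- `P` is a reflexive polytope. -/
def IsReflexive [Fintype V] (P : Set (V → ℝ)) : Prop :=
  IsLatticePolytope P ∧ (0 : V → ℝ) ∈ interior P ∧ IsLatticePolytope (dualPoly P)

/-- The `i`-th unit coordinate vector. -/
def unitVec [DecidableEq V] (i : V) : V → ℝ := fun j => if j = i then 1 else 0

/-- Symmetric edge polytope of type A: `conv{±(e_i - e_j) : {i,j} ∈ E(G)}`. -/
def symEdgeA [DecidableEq V] (G : SimpleGraph V) : Set (V → ℝ) :=
  convexHull ℝ {v | ∃ i j, G.Adj i j ∧ v = unitVec i - unitVec j}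

/-- The polytope `B_G = conv({0, e_1, …, e_d} ∪ {e_i + e_j : {i,j} ∈ E(G)})`. -/
def typeBBase [DecidableEq V] (G : SimpleGraph V) : Set (V → ℝ) :=
  convexHull ℝ ({0} ∪ {v | ∃ i, v = unitVec i} ∪
    {v | ∃ i j, G.Adj i j ∧ v = unitVec i + unitVec j})

/-- Symmetric edge polytope of type B: `𝓑_G = (B_G)^±`. -/
def symEdgeB [DecidableEq V] (G : SimpleGraph V) : Set (V → ℝ) := uncond (typeBBase G)

/-- The suspension of a graph on `Fin d`: a new vertex joined to all old vertices. -/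
def suspension {d : ℕ} (G : SimpleGraph (Fin d)) : SimpleGraph (Fin (d + 1)) :=
  SimpleGraph.fromRel (fun a b =>
    (∃ p q : Fin d, G.Adj p q ∧ a = p.castSucc ∧ b = q.castSucc) ∨
      (a ≠ Fin.last d ∧ b = Fin.last d))

/-- The cut `E_S` of `G`, as a spanning subgraph of `G`. -/
def cutGraph [DecidableEq V] (G : SimpleGraph V) (S : Finset V) : SimpleGraph V :=
  SimpleGraph.fromRel (fun a b => G.Adj a b ∧ ((a ∈ S) ↔ (b ∉ S)))

/-- Contraction of the edge `{i,j}`: merge `j` into `i` (the vertex `j` becomes isolated,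
so that the resulting polytopes are the same as for the contracted graph on `d-1` vertices). -/
def contractEdge {d : ℕ} (G : SimpleGraph (Fin d)) (i j : Fin d) : SimpleGraph (Fin d) :=
  SimpleGraph.fromRel (fun a b => a ≠ j ∧ b ≠ j ∧
    (G.Adj a b ∨ (a = i ∧ G.Adj j b) ∨ (b = i ∧ G.Adj a j)))

/-- The graph `G̃` attached to a bipartite graph `G` with bipartition `V₁ ∪ V₁ᶜ`. -/
def tildeGraph {d : ℕ} (G : SimpleGraph (Fin d)) (V1 : Finset (Fin d)) :
    SimpleGraph (Fin (d + 2)) :=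
  SimpleGraph.fromRel (fun a b =>
    (∃ p q : Fin d, G.Adj p q ∧ a = p.castSucc.castSucc ∧ b = q.castSucc.castSucc) ∨
    (∃ p ∈ V1, a = (p.castSucc.castSucc : Fin (d + 2)) ∧ b = (⟨d, by omega⟩ : Fin (d + 2))) ∨
    (∃ p : Fin d, p ∉ V1 ∧ a = p.castSucc.castSucc ∧ b = (⟨d + 1, by omega⟩ : Fin (d + 2))) ∨
    (a = (⟨d, by omega⟩ : Fin (d + 2)) ∧ b = (⟨d + 1, by omega⟩ : Fin (d + 2))))

/-- Unimodular (lattice) equivalence of polytopes. -/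
def UnimodEquiv {n m : ℕ} (P : Set (Fin n → ℝ)) (Q : Set (Fin m → ℝ)) : Prop :=
  ∃ (f : (Fin n → ℝ) →ᵃ[ℝ] (Fin m → ℝ)) (g : (Fin m → ℝ) →ᵃ[ℝ] (Fin n → ℝ)),
    f '' P = Q ∧ g '' Q = P ∧ (∀ x ∈ P, g (f x) = x) ∧ (∀ y ∈ Q, f (g y) = y) ∧
    (∀ x, IsLatticePoint x → IsLatticePoint (f x)) ∧
    (∀ y, IsLatticePoint y → IsLatticePoint (g y))

/-- A subgraph is 2-connected: connected, and still connected after deleting any vertex. -/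
def TwoConnSub {G : SimpleGraph V} (B : G.Subgraph) : Prop :=
  B.Connected ∧ ∀ v ∈ B.verts, (B.deleteVerts {v}).Connected

/-- A block (2-connected component) of `G`: a maximal 2-connected subgraph. -/
def IsBlock (G : SimpleGraph V) (B : G.Subgraph) : Prop :=
  TwoConnSub B ∧ ∀ B' : G.Subgraph, B ≤ B' → TwoConnSub B' → B' = B

/-- The coordinate projection `π_J` of a subset of `ℝ^d` onto `ℝ^{|J|}`. -/
def projSet {d : ℕ} (J : Finset (Fin d)) (P : Set (Fin d → ℝ)) : Set (Fin J.card → ℝ) :=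
  (fun (x : Fin d → ℝ) (k : Fin J.card) => x (J.orderEmbOfFin rfl k)) '' P

section Posets

variable {d : ℕ}

/-- `A` is an antichain of the poset `P` on `Fin d`. -/
def IsPosetAntichain (P : PartialOrder (Fin d)) (A : Finset (Fin d)) : Prop :=
  ∀ i ∈ A, ∀ j ∈ A, i ≠ j → ¬ P.lt i j ∧ ¬ P.lt j i

/-- The chain polytope of a poset on `Fin d`. -/
def chainPoly (P : PartialOrder (Fin d)) : Set (Fin d → ℝ) :=
  convexHull ℝ {x | ∃ A : Finset (Fin d), IsPosetAntichain P A ∧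
    x = fun i => if i ∈ A then (1 : ℝ) else 0}

/-- The enriched chain polytope `C_P^(e) = (C_P)^±`. -/
def enrichedChainPoly (P : PartialOrder (Fin d)) : Set (Fin d → ℝ) := uncond (chainPoly P)

/-- The twinned chain polytope `C_{P,Q} = conv(C_P ∪ -C_Q)`. -/
def twinnedChainPoly (P Q : PartialOrder (Fin d)) : Set (Fin d → ℝ) :=
  convexHull ℝ (chainPoly P ∪ -(chainPoly Q))

/-- The order polytope of a poset on `Fin d`. -/
def orderPoly (P : PartialOrder (Fin d)) : Set (Fin d → ℝ) :=
  {x | (∀ i, 0 ≤ x i ∧ x i ≤ 1) ∧ ∀ i j, P.lt i j → x i ≤ x j}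

/-- A poset on `Fin d` is naturally labeled. -/
def NaturallyLabeled (P : PartialOrder (Fin d)) : Prop := ∀ i j, P.lt i j → i < j

/-- `π` (as a listing `π 0, π 1, …`) is a linear extension of `P`. -/
def IsLinearExtension (P : PartialOrder (Fin d)) (π : Fin d → Fin d) : Prop :=
  Function.Bijective π ∧ ∀ a b, P.lt (π a) (π b) → a < b

/-- The sequence of (1-based) labels of the listing `π`, with sentinel `π_0 = 0`. -/
def seqOf (π : Fin d → Fin d) (k : ℕ) : ℕ :=
  if h : 1 ≤ k ∧ k ≤ d then (π ⟨k - 1, by omega⟩).val + 1 else 0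

/-- The number of left peaks of the listing `π`. -/
def leftPeakCount (π : Fin d → Fin d) : ℕ :=
  ((Finset.Icc 1 (d - 1)).filter
    (fun i => seqOf π (i - 1) < seqOf π i ∧ seqOf π (i + 1) < seqOf π i)).card

open scoped Classical in
/-- The left peak polynomial `W_P^(ℓ)(x) = ∑_{π ∈ L(P)} x^{pk^(ℓ)(π)}`. -/
noncomputable def leftPeakPoly (P : PartialOrder (Fin d)) : Polynomial ℝ :=
  ∑ π : Equiv.Perm (Fin d),
    if IsLinearExtension P (π : Fin d → Fin d) then
      Polynomial.X ^ leftPeakCount (π : Fin d → Fin d) else 0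

/-- The strict order of the ordinal sum `P_I ⊕ Q_{Iᶜ}` of induced subposets. -/
def ordinalSumLt (P Q : PartialOrder (Fin d)) (I : Set (Fin d)) (i j : Fin d) : Prop :=
  (i ∈ I ∧ j ∈ I ∧ P.lt i j) ∨ (i ∉ I ∧ j ∉ I ∧ Q.lt i j) ∨ (i ∈ I ∧ j ∉ I)

/-- The polynomial `(x+1)^d f(4x/(x+1)^2)` (for `deg f ≤ d/2`). -/
noncomputable def gammaSub (d : ℕ) (f : Polynomial ℝ) : Polynomial ℝ :=
  ∑ k ∈ Finset.range (d + 1),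
    Polynomial.C (f.coeff k * 4 ^ k) * Polynomial.X ^ k * (1 + Polynomial.X) ^ (d - 2 * k)

/-- The Cayley sum `X * Y ⊂ ℝ^{d+1}`. -/
def cayleySum (X Y : Set (Fin d → ℝ)) : Set (Fin (d + 1) → ℝ) :=
  convexHull ℝ ({z | ∃ x ∈ X, z = Fin.snoc x 0} ∪ {z | ∃ y ∈ Y, z = Fin.snoc y 1})

/-- `Ω(X, Y) = conv((X × {1}) ∪ (−Y × {−1})) ⊂ ℝ^{d+1}`. -/
def omegaSum (X Y : Set (Fin d → ℝ)) : Set (Fin (d + 1) → ℝ) :=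
  convexHull ℝ ({z | ∃ x ∈ X, z = Fin.snoc x 1} ∪ {z | ∃ y ∈ Y, z = -(Fin.snoc y 1)})

/-- `Γ(X, Y) = conv(X ∪ (−Y))`. -/
def gammaSum (X Y : Set (Fin d → ℝ)) : Set (Fin d → ℝ) :=
  convexHull ℝ (X ∪ -Y)

/-- Enriched `(P,Q)`-partition. -/
def IsEnrichedPQPartition (P Q : PartialOrder (Fin d)) (f : Fin d → ℤ) : Prop :=
  (∀ x y, P.lt x y → 0 ≤ f x → 0 ≤ f y → f x ≤ f y) ∧
  (∀ x y, Q.lt x y → f x ≤ 0 → f y ≤ 0 → f y ≤ f x)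

/-- `M(f) = max({0} ∪ f([d]))`. -/
def maxVal (f : Fin d → ℤ) : ℤ :=
  (insert 0 (Finset.image f Finset.univ)).max' (Finset.insert_nonempty _ _)

/-- `m(f) = min({0} ∪ f([d]))`. -/
def minVal (f : Fin d → ℤ) : ℤ :=
  (insert 0 (Finset.image f Finset.univ)).min' (Finset.insert_nonempty _ _)

/-- The number of enriched `(P,Q)`-partitions `f` with `M(f) - m(f) ≤ m`. -/
noncomputable def OmegaPQ (P Q : PartialOrder (Fin d)) (m : ℕ) : ℕ :=
  Set.ncard {f : Fin d → ℤ | IsEnrichedPQPartition P Q f ∧ maxVal f - minVal f ≤ (m : ℤ)}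

end Posets

section Faces

variable [Fintype V]

/-- `F` is a face of `P` (cut out by a supporting linear functional). -/
def IsFace (P F : Set (V → ℝ)) : Prop :=
  ∃ (c : V → ℝ) (b : ℝ), (∀ x ∈ P, ∑ i, c i * x i ≤ b) ∧ F = {x ∈ P | ∑ i, c i * x i = b}

/-- `F` is a facet of `P`: a face of dimension `dim P - 1`. -/
def IsFacet (P F : Set (V → ℝ)) : Prop :=
  IsFace P F ∧ polyDim F + 1 = polyDim P

/-- `F` is a simplex: the convex hull of affinely independent points. -/
def IsSimplexSet (F : Set (V → ℝ)) : Prop :=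
  ∃ S : Finset (V → ℝ), AffineIndependent ℝ (fun v : S => (v : V → ℝ)) ∧
    F = convexHull ℝ (S : Set (V → ℝ))

end Faces

end ABP

open ABP

lemma aux_G {α : Type*} [DecidableEq α] (s : Finset α) :
    ∑ K ∈ s.powerset, (-1 : ℤ) ^ (s.card - K.card) * 2 ^ K.card = 1 := by
  have h := Finset.prod_add (fun _ : α => (2:ℤ)) (fun _ => (-1:ℤ)) s
  simp only [Finset.prod_const] at h
  norm_num at h
  refine Eq.trans (Finset.sum_congr rfl fun K hK => ?_) h.symm
  rw [Finset.card_sdiff_of_subset (Finset.mem_powerset.mp hK), mul_comm]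

lemma aux_F {d : ℕ} (I : Finset (Fin d)) :
    ∑ J : Finset (Fin d), (if I ⊆ J then (-1 : ℤ) ^ (d - J.card) * 2 ^ J.card else 0)
      = 2 ^ I.card := by
  rw [← Finset.sum_filter]
  have hbij : ∑ J ∈ Finset.univ.filter (fun J => I ⊆ J), (-1 : ℤ) ^ (d - J.card) * 2 ^ J.card
      = ∑ K ∈ Iᶜ.powerset, (-1 : ℤ) ^ (d - (K ∪ I).card) * 2 ^ (K ∪ I).card := by
    refine Finset.sum_nbij' (fun J => J \ I) (fun K => K ∪ I) ?_ ?_ ?_ ?_ ?_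
    · intro J hJ
      simp only [Finset.mem_powerset]
      intro x hx
      simp only [Finset.mem_sdiff] at hx
      simp [Finset.mem_compl, hx.2]
    · intro K hK
      simp [Finset.subset_union_right]
    · intro J hJ
      simp only [Finset.mem_filter] at hJ
      exact Finset.sdiff_union_of_subset hJ.2
    · intro K hK
      simp only [Finset.mem_powerset] at hK
      have hdisj : Disjoint K I := Finset.disjoint_left.mpr (fun a ha => by simpa using hK ha)
      rw [Finset.union_sdiff_cancel_right hdisj]
    · intro J hJ
      simp only [Finset.mem_filter] at hJ
      rw [Finset.sdiff_union_of_subset hJ.2]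
  rw [hbij]
  have hd : ∀ K ∈ Iᶜ.powerset, (-1 : ℤ) ^ (d - (K ∪ I).card) * 2 ^ (K ∪ I).card
      = 2 ^ I.card * ((-1 : ℤ) ^ (Iᶜ.card - K.card) * 2 ^ K.card) := by
    intro K hK
    simp only [Finset.mem_powerset] at hK
    have hdisj : Disjoint K I := Finset.disjoint_left.mpr (fun a ha => by simpa using hK ha)
    rw [Finset.card_union_of_disjoint hdisj]
    have h1 : Iᶜ.card = d - I.card := by
      rw [Finset.card_compl]; simp
    have h2 : K.card ≤ Iᶜ.card := Finset.card_le_card hK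
    have h3 : I.card ≤ d := Finset.card_le_card (Finset.subset_univ I) |>.trans (by simp)
    have : d - (K.card + I.card) = Iᶜ.card - K.card := by omega
    rw [this, pow_add]
    ring
  rw [Finset.sum_congr rfl hd, ← Finset.mul_sum, aux_G, mul_one]

lemma bound_of_lat {d : ℕ} {P : Set (Fin d → ℝ)} (hlat : IsLatticePolytope P) :
    ∃ C : ℝ, 0 ≤ C ∧ ∀ x ∈ P, ∀ i, |x i| ≤ C := by
  obtain ⟨S, -, rfl⟩ := hlat
  have hc : IsCompact (convexHull ℝ (S : Set (Fin d → ℝ))) :=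
    S.finite_toSet.isCompact_convexHull ℝ
  obtain ⟨r, hr⟩ := (Metric.isBounded_iff_subset_closedBall 0).mp hc.isBounded
  refine ⟨max r 0, le_max_right _ _, fun x hx i => ?_⟩
  have := hr hx
  rw [Metric.mem_closedBall, dist_zero_right] at this
  calc |x i| = ‖x i‖ := rfl
    _ ≤ ‖x‖ := norm_le_pi_norm x i
    _ ≤ max r 0 := le_trans this (le_max_left _ _)

lemma finite_latpts {d : ℕ} {Q : Set (Fin d → ℝ)} {C : ℝ} (hC : ∀ x ∈ Q, ∀ i, |x i| ≤ C) :
    {x : Fin d → ℤ | (fun i => (x i : ℝ)) ∈ Q}.Finite := by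
  refine (Set.finite_Icc (fun _ : Fin d => -⌈C⌉) (fun _ => ⌈C⌉)).subset ?_
  intro x hx
  constructor <;> intro i
  · have h := (abs_le.mp (hC _ hx i)).1
    have : ((-⌈C⌉ : ℤ) : ℝ) ≤ (x i : ℝ) := le_trans (by push_cast; linarith [Int.le_ceil C]) h
    exact_mod_cast this
  · have h := (abs_le.mp (hC _ hx i)).2
    have : ((x i : ℤ) : ℝ) ≤ ((⌈C⌉ : ℤ) : ℝ) := le_trans h (by push_cast; linarith [Int.le_ceil C])
    exact_mod_cast this

lemma count_identity {d : ℕ} {P : Set (Fin d → ℝ)} (hlat : IsLatticePolytope P)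
    (hab : IsAntiBlocking P) {m : ℕ} (hm : 1 ≤ m) :
    (latticeCount (uncond P) m : ℤ)
      = ∑ J : Finset (Fin d), (-1 : ℤ) ^ (d - J.card) * 2 ^ J.card *
          (latticeCount (projSet J P) m : ℤ) := by
  classical
  obtain ⟨C, hC0, hC⟩ := bound_of_lat hlat
  -- bounds for dilates
  have hCm : ∀ y ∈ (m : ℝ) • P, ∀ i, |y i| ≤ m * C := by
    rintro y ⟨p, hp, rfl⟩ i
    simp only [Pi.smul_apply, smul_eq_mul, abs_mul, Nat.abs_cast]
    exact mul_le_mul_of_nonneg_left (hC p hp i) (by positivity)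
  have hCum : ∀ y ∈ (m : ℝ) • uncond P, ∀ i, |y i| ≤ m * C := by
    rintro y ⟨z, ⟨ε, p, hp, rfl⟩, rfl⟩ i
    simp only [Pi.smul_apply, smul_eq_mul, Pi.mul_apply, abs_mul, Nat.abs_cast, signVec]
    have : |(if ε i then (1:ℝ) else -1)| = 1 := by split <;> simp
    rw [this, one_mul]
    exact mul_le_mul_of_nonneg_left (hC p hp i) (by positivity)
  set S : Set (Fin d → ℤ) := {x | (fun i => (x i : ℝ)) ∈ (m : ℝ) • P} with hSdef
  set T : Set (Fin d → ℤ) := {x | (fun i => (x i : ℝ)) ∈ (m : ℝ) • uncond P} with hTdef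
  have hSfin : S.Finite := finite_latpts hCm
  have hTfin : T.Finite := finite_latpts hCum
  -- points of S are nonnegative
  have hSpos : ∀ x ∈ S, ∀ i, 0 ≤ x i := by
    rintro x ⟨p, hp, hxp⟩ i
    have : (0:ℝ) ≤ (x i : ℝ) := by
      have := congrFun hxp i
      simp only [Pi.smul_apply, smul_eq_mul] at this
      rw [← this]
      exact mul_nonneg (by positivity) (hab.1 p hp i)
    exact_mod_cast this
  -- membership transfer lemmas
  have habs : ∀ y ∈ T, (fun i => |y i|) ∈ S := by
    rintro y ⟨z, ⟨ε, p, hp, rfl⟩, hyz⟩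
    refine ⟨p, hp, funext fun i => ?_⟩
    have := congrFun hyz i
    simp only [Pi.smul_apply, smul_eq_mul, Pi.mul_apply, signVec] at this ⊢
    rw [Int.cast_abs, ← this, abs_mul, abs_mul]
    have h1 : |(if ε i then (1:ℝ) else -1)| = 1 := by split <;> simp
    rw [h1, Nat.abs_cast, abs_of_nonneg (hab.1 p hp i)]
    ring
  have hsign : ∀ x ∈ S, ∀ y : Fin d → ℤ, (∀ i, |y i| = x i) → y ∈ T := by
    rintro x ⟨p, hp, hxp⟩ y hy
    refine ⟨signVec (fun i => decide (0 ≤ y i)) * p, ⟨_, p, hp, rfl⟩, funext fun i => ?_⟩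
    have hxi := congrFun hxp i
    simp only [Pi.smul_apply, smul_eq_mul, Pi.mul_apply, signVec] at hxi ⊢
    by_cases h0 : 0 ≤ y i
    · have : y i = x i := by rw [← hy i, abs_of_nonneg h0]
      rw [if_pos (decide_eq_true h0), this, ← hxi]; ring
    · have : y i = -x i := by rw [← hy i, abs_of_neg (lt_of_not_ge h0)]; ring
      rw [if_neg (by simpa using h0), this]; push_cast; rw [← hxi]; ring
  -- counting T fiberwise over abs
  have hcardT : hTfin.toFinset.card
      = ∑ x ∈ hSfin.toFinset, 2 ^ ((Finset.univ.filter (fun i => x i ≠ 0)).card) := by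
    rw [Finset.card_eq_sum_card_fiberwise (f := fun y (i : Fin d) => |y i|)
      (t := hSfin.toFinset) (fun y hy => by
        simp only [Finset.mem_coe, Set.Finite.mem_toFinset] at hy ⊢; exact habs y hy)]
    refine Finset.sum_congr rfl fun x hx => ?_
    rw [Set.Finite.mem_toFinset] at hx
    have hxpos := hSpos x hx
    have hfib : hTfin.toFinset.filter (fun y => (fun i => |y i|) = x)
        = Fintype.piFinset (fun i => ({x i, -x i} : Finset ℤ)) := by
      ext y
      simp only [Finset.mem_filter, Set.Finite.mem_toFinset, Fintype.mem_piFinset,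
        Finset.mem_insert, Finset.mem_singleton]
      constructor
      · rintro ⟨-, habs'⟩ i
        have := congrFun habs' i
        rcases abs_eq (hxpos i) |>.mp this with h | h
        · exact Or.inl h
        · exact Or.inr h
      · intro hy
        have habs' : ∀ i, |y i| = x i := by
          intro i
          rcases hy i with h | h
          · rw [h]; exact abs_of_nonneg (hxpos i)
          · rw [h, abs_neg]; exact abs_of_nonneg (hxpos i)
        exact ⟨hsign x hx y habs', funext habs'⟩
    rw [hfib, Fintype.card_piFinset]
    have hcard2 : ∀ i, ({x i, -x i} : Finset ℤ).card = if x i ≠ 0 then 2 else 1 := by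
      intro i
      by_cases h : x i = 0
      · simp [h]
      · rw [Finset.card_insert_of_notMem (by simp only [Finset.mem_singleton]; omega)]
        simp [h]
    rw [Finset.prod_congr rfl (fun i _ => hcard2 i), Finset.prod_ite, Finset.prod_const,
      Finset.prod_const, one_pow, mul_one]
  -- projection counts
  have hproj : ∀ J : Finset (Fin d), latticeCount (projSet J P) m
      = (hSfin.toFinset.filter (fun x => ∀ i ∉ J, x i = 0)).card := by
    intro J
    set e := J.orderEmbOfFin (rfl : J.card = J.card) with he
    set Φ : (Fin d → ℤ) → (Fin J.card → ℤ) := fun x k => x (e k) with hΦ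
    have hinj : Set.InjOn Φ (hSfin.toFinset.filter (fun x => ∀ i ∉ J, x i = 0)) := by
      intro a ha b hb hab
      simp only [Finset.coe_filter, Set.mem_setOf_eq] at ha hb
      funext i
      by_cases hi : i ∈ J
      · obtain ⟨k, hk⟩ : ∃ k, e k = i := by
          have := J.range_orderEmbOfFin (rfl : J.card = J.card)
          rw [← he] at this
          have : i ∈ Set.range e := by rw [this]; exact hi
          exact this
        rw [← hk]
        exact congrFun hab k
      · rw [ha.2 i hi, hb.2 i hi]
    have hset : {y : Fin J.card → ℤ | (fun k => (y k : ℝ)) ∈ (m : ℝ) • projSet J P}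
        = Φ '' (hSfin.toFinset.filter (fun x => ∀ i ∉ J, x i = 0)) := by
      ext y
      simp only [Set.mem_setOf_eq, Set.mem_image, Finset.coe_filter,
        Set.Finite.mem_toFinset]
      constructor
      · rintro ⟨q, ⟨p, hp, rfl⟩, hyq⟩
        have hp' : (fun i => if i ∈ J then p i else 0) ∈ P := by
          refine hab.2 p hp _ fun i => ?_
          split
          · exact ⟨hab.1 p hp i, le_refl _⟩
          · exact ⟨le_refl _, hab.1 p hp i⟩
        set x : Fin d → ℤ := fun i => if h : i ∈ J then y ((J.orderIsoOfFin rfl).symm ⟨i, h⟩) else 0 with hx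
        refine ⟨x, ⟨⟨(fun i => if i ∈ J then p i else 0), hp', funext fun i => ?_⟩, fun i hi => dif_neg hi⟩, funext fun k => ?_⟩
        · simp only [hx, Pi.smul_apply, smul_eq_mul]
          by_cases hi : i ∈ J
          · rw [dif_pos hi, if_pos hi]
            have := congrFun hyq ((J.orderIsoOfFin rfl).symm ⟨i, hi⟩)
            simp only [Pi.smul_apply, smul_eq_mul] at this
            rw [← this]
            congr 1
            rw [← Finset.coe_orderIsoOfFin_apply, OrderIso.apply_symm_apply]
          · rw [dif_neg hi, if_neg hi, Int.cast_zero, mul_zero]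
        · simp only [hΦ, hx]
          rw [dif_pos (J.orderEmbOfFin_mem (rfl : J.card = J.card) k)]
          congr 1
          refine (OrderIso.symm_apply_eq _).mpr (Subtype.ext ?_)
          rw [Finset.coe_orderIsoOfFin_apply]
      · rintro ⟨x, ⟨⟨p, hp, hxp⟩, hsupp⟩, rfl⟩
        refine ⟨fun k => p (e k), ⟨p, hp, rfl⟩, funext fun k => ?_⟩
        have := congrFun hxp (e k)
        simp only [Pi.smul_apply, smul_eq_mul] at this ⊢
        rw [← this]
    rw [latticeCount, hset, Set.ncard_image_of_injOn hinj, Set.ncard_coe_finset]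
  -- put everything together
  have hcount : latticeCount (uncond P) m = hTfin.toFinset.card := by
    rw [latticeCount, Set.ncard_eq_toFinset_card _ hTfin]
  rw [hcount, hcardT]
  simp only [hproj]
  have swap : ∑ J : Finset (Fin d), (-1:ℤ) ^ (d - J.card) * 2 ^ J.card *
      ((hSfin.toFinset.filter (fun x => ∀ i ∉ J, x i = 0)).card : ℤ)
      = ∑ x ∈ hSfin.toFinset, ∑ J : Finset (Fin d),
        (if (Finset.univ.filter (fun i => x i ≠ 0)) ⊆ J then (-1:ℤ) ^ (d - J.card) * 2 ^ J.card else 0) := by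
    rw [Finset.sum_comm]
    refine Finset.sum_congr rfl fun J _ => ?_
    rw [Finset.card_filter]
    push_cast
    rw [Finset.mul_sum]
    refine Finset.sum_congr rfl fun x _ => ?_
    have : (∀ i ∉ J, x i = 0) ↔ (Finset.univ.filter (fun i => x i ≠ 0)) ⊆ J := by
      constructor
      · intro h i hi
        simp only [Finset.mem_filter, Finset.mem_univ, true_and] at hi
        by_contra hiJ
        exact hi (h i hiJ)
      · intro h i hiJ
        by_contra hne
        exact hiJ (h (Finset.mem_filter.mpr ⟨Finset.mem_univ i, hne⟩))
    rcases Classical.em (∀ i ∉ J, x i = 0) with hcase | hcase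
    · rw [if_pos hcase, if_pos (this.mp hcase), mul_one]
    · rw [if_neg hcase, if_neg (fun hc => hcase (this.mpr hc)), mul_zero]
  rw [swap]
  push_cast
  refine Finset.sum_congr rfl fun x _ => ?_
  rw [aux_F]

lemma vspan_top {d : ℕ} {P : Set (Fin d → ℝ)} (hdim : polyDim P = d) :
    vectorSpan ℝ P = ⊤ := by
  apply Submodule.eq_top_of_finrank_eq
  rw [show Module.finrank ℝ (vectorSpan ℝ P) = d from hdim]
  simp [Module.finrank_pi]

lemma polyDim_uncond {d : ℕ} {P : Set (Fin d → ℝ)} (hdim : polyDim P = d) :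
    polyDim (uncond P) = d := by
  have hsub : P ⊆ uncond P := by
    intro x hx
    exact ⟨fun _ => true, x, hx, by funext i; simp [signVec]⟩
  have h1 : vectorSpan ℝ (uncond P) = ⊤ :=
    top_le_iff.mp (le_trans (vspan_top hdim).ge (vectorSpan_mono ℝ hsub))
  rw [polyDim, h1, finrank_top]
  simp [Module.finrank_pi]

lemma polyDim_proj {d : ℕ} {P : Set (Fin d → ℝ)} (hdim : polyDim P = d)
    (J : Finset (Fin d)) : polyDim (projSet J P) = J.card := by
  set f : (Fin d → ℝ) →ₗ[ℝ] (Fin J.card → ℝ) :=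
    LinearMap.funLeft ℝ ℝ (fun k => J.orderEmbOfFin rfl k) with hf
  have hsurj : Function.Surjective f :=
    LinearMap.funLeft_surjective_of_injective ℝ ℝ _
      (fun a b hab => (J.orderEmbOfFin rfl).injective hab)
  have himg : projSet J P = f '' P := rfl
  have htop : vectorSpan ℝ (projSet J P) = ⊤ := by
    rw [himg]
    apply top_le_iff.mp
    have h1 : Submodule.map f (vectorSpan ℝ P) ≤ vectorSpan ℝ (f '' P) := by
      rw [vectorSpan, vectorSpan, Submodule.map_span]
      apply Submodule.span_mono
      rintro - ⟨v, hv, rfl⟩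
      obtain ⟨a, ha, b, hb, rfl⟩ := hv
      exact ⟨f a, Set.mem_image_of_mem f ha, f b, Set.mem_image_of_mem f hb,
        (map_sub f a b).symm⟩
    calc (⊤ : Submodule ℝ (Fin J.card → ℝ)) = Submodule.map f ⊤ := by
          rw [Submodule.map_top, LinearMap.range_eq_top.mpr hsurj]
      _ = Submodule.map f (vectorSpan ℝ P) := by rw [vspan_top hdim]
      _ ≤ _ := h1
  rw [polyDim, htop, finrank_top]
  simp [Module.finrank_pi]

/-- Proposition: h* of the unconditional polytope of an anti-blocking polytope.
For an anti-blocking lattice polytope `P ⊂ ℝ^d_{≥0}` of dimension `d`,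
`h*(P^±, x) = ∑_{J ⊆ [d]} 2^{|J|} (x-1)^{d-|J|} h*(π_J(P), x)`. -/
theorem hstar_uncond_formula {d : ℕ} (P : Set (Fin d → ℝ))
    (hlat : IsLatticePolytope P) (hab : IsAntiBlocking P) (hdim : polyDim P = d)
    (h : Polynomial ℝ) (hh : IsHStar (uncond P) h)
    (hJ : Finset (Fin d) → Polynomial ℝ)
    (hhJ : ∀ J : Finset (Fin d), IsHStar (projSet J P) (hJ J)) :
    h = ∑ J : Finset (Fin d),
      (2 : Polynomial ℝ) ^ J.card * (Polynomial.X - 1) ^ (d - J.card) * hJ J := by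
  rw [← Polynomial.coe_inj]
  rw [IsHStar, polyDim_uncond hdim] at hh
  have hhJ' : ∀ J : Finset (Fin d),
      (PowerSeries.mk fun n => if n = 0 then (1:ℝ) else (latticeCount (projSet J P) n : ℝ)) *
        (1 - PowerSeries.X) ^ (J.card + 1) = ((hJ J : ℝ[X]) : PowerSeries ℝ) := by
    intro J
    have := hhJ J
    rwa [IsHStar, polyDim_proj hdim J] at this
  have hE : (PowerSeries.mk fun n =>
        if n = 0 then (1:ℝ) else (latticeCount (uncond P) n : ℝ))
      = ∑ J : Finset (Fin d), PowerSeries.C ((-1 : ℝ) ^ (d - J.card) * 2 ^ J.card) *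
          PowerSeries.mk (fun n =>
            if n = 0 then (1:ℝ) else (latticeCount (projSet J P) n : ℝ)) := by
    ext n
    rw [map_sum]
    simp only [PowerSeries.coeff_C_mul, PowerSeries.coeff_mk]
    rcases Nat.eq_zero_or_pos n with rfl | hn
    · norm_num
      have := aux_F (∅ : Finset (Fin d))
      simp only [Finset.empty_subset, if_true, Finset.card_empty, pow_zero] at this
      exact_mod_cast this.symm
    · rw [if_neg (by omega)]
      have hci := count_identity hlat hab hn
      have : (latticeCount (uncond P) n : ℝ)
          = ∑ J : Finset (Fin d), (-1 : ℝ) ^ (d - J.card) * 2 ^ J.card *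
              (latticeCount (projSet J P) n : ℝ) := by exact_mod_cast hci
      rw [this]
      refine Finset.sum_congr rfl fun J _ => ?_
      rw [if_neg (by omega)]
  rw [← hh, hE, Finset.sum_mul]
  have hcoesum : ((∑ J : Finset (Fin d),
        (2 : ℝ[X]) ^ J.card * (Polynomial.X - 1) ^ (d - J.card) * hJ J : ℝ[X]) : PowerSeries ℝ)
      = ∑ J : Finset (Fin d),
        (((2 : ℝ[X]) ^ J.card * (Polynomial.X - 1) ^ (d - J.card) * hJ J : ℝ[X]) : PowerSeries ℝ) := by
    rw [← Polynomial.coeToPowerSeries.ringHom_apply, map_sum]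
    simp only [Polynomial.coeToPowerSeries.ringHom_apply]
  rw [hcoesum]
  refine Finset.sum_congr rfl fun J _ => ?_
  have hcard : J.card ≤ d := by
    simpa using Finset.card_le_card (Finset.subset_univ J)
  have hsplit : d + 1 = (d - J.card) + (J.card + 1) := by omega
  have coe2 : ((2 : ℝ[X]) : PowerSeries ℝ) = 2 := by
    rw [show (2 : ℝ[X]) = 1 + 1 by norm_num, Polynomial.coe_add, Polynomial.coe_one]
    norm_num
  rw [Polynomial.coe_mul, Polynomial.coe_mul, Polynomial.coe_pow, Polynomial.coe_pow,
    Polynomial.coe_sub, Polynomial.coe_X, Polynomial.coe_one, coe2, ← hhJ' J,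
    hsplit, pow_add, map_mul, map_pow, map_pow, map_neg, map_one, map_ofNat]
  have hx1 : ((PowerSeries.X : PowerSeries ℝ) - 1) ^ (d - J.card)
      = (-1 : PowerSeries ℝ) ^ (d - J.card) * (1 - PowerSeries.X) ^ (d - J.card) := by
    rw [← mul_pow]
    ring_nf
  rw [hx1]
  ring
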